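/- Let X ⊆ ℝⁿ be nonempty, closed, and convex, let p = (p_i) and q = (q_i) be probability vectors on {1,…,m} with strictly positive components, and set r := ∑_{i=1}^m p_i²/q_i. Let B_1,…,B_m : ℝⁿ → ℝⁿ each be L-Lipschitz, define A_i := (p_i/q_i) B_i, and suppose B := ∑_{i=1}^m p_i B_i is μ-strongly monotone with 0 < μ ≤ L. Let x* ∈ ℝⁿ satisfy x* = Π_X(x* − γ B(x*)) for every γ > 0. Set M_B := max_{1≤i≤m} ‖B_i(x*)‖₂, c := 2(1 + 2r)L²/μ², and γ_t := 2/(μ(t + c)) for t ≥ 0. Let (Ω, P) be a probability space and (I_t)_{t≥0} an i.i.d. sequence of {1,…,m}-valued random variables with P(I_t = i) = q_i for all i, t. Fix y_0 ∈ X and define the SGD iterates y_{t+1} := Π_X(y_t − γ_t A_{I_t}(y_t)) for t ≥ 0. Then for all t ≥ 1: E[‖y_t − x*‖₂²] ≤ ( (2(1 + 2r)L²/μ² − 1)‖y_0 − x*‖₂² + 8 r M_B²/μ² ) / t. -/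

import Mathlib

open MeasureTheory ProbabilityTheory
open scoped RealInnerProductSpace ENNReal

section auxproj

variable {F : Type*} [NormedAddCommGroup F] [InnerProductSpace ℝ F]

lemma proj_inner_le {X : Set F} (hXcv : Convex ℝ X) {pr : F → F}
    (hmem : ∀ z, pr z ∈ X) (hnear : ∀ z, ∀ w ∈ X, dist z (pr z) ≤ dist z w)
    (z : F) : ∀ w ∈ X, ⟪z - pr z, w - pr z⟫ ≤ 0 := by
  haveI : Nonempty X := ⟨⟨pr z, hmem z⟩⟩
  refine (norm_eq_iInf_iff_real_inner_le_zero hXcv (hmem z)).1 (le_antisymm ?_ ?_)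
  · exact le_ciInf fun w => by simpa [dist_eq_norm] using hnear z w w.2
  · have hbdd : BddBelow (Set.range fun w : X => ‖z - (w : F)‖) :=
      ⟨0, by rintro x ⟨w, rfl⟩; exact norm_nonneg _⟩
    exact ciInf_le hbdd ⟨pr z, hmem z⟩

lemma proj_nonexpansive {X : Set F} (hXcv : Convex ℝ X) {pr : F → F}
    (hmem : ∀ z, pr z ∈ X) (hnear : ∀ z, ∀ w ∈ X, dist z (pr z) ≤ dist z w)
    (u w : F) : ‖pr u - pr w‖ ≤ ‖u - w‖ := by
  have h1 : 0 ≤ ⟪u - pr u, pr u - pr w⟫ := by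
    have h' := proj_inner_le hXcv hmem hnear u (pr w) (hmem w)
    rw [show pr w - pr u = -(pr u - pr w) by abel, inner_neg_right] at h'
    linarith
  have h2 : 0 ≤ ⟪pr w - w, pr u - pr w⟫ := by
    have h' := proj_inner_le hXcv hmem hnear w (pr u) (hmem u)
    rw [show (w : F) - pr w = -(pr w - w) by abel, inner_neg_left] at h'
    linarith
  have hd : u - w = (u - pr u) + (pr u - pr w) + (pr w - w) := by abel
  have key : ‖pr u - pr w‖ ^ 2 ≤ ⟪u - w, pr u - pr w⟫ := by
    rw [hd, inner_add_left, inner_add_left, real_inner_self_eq_norm_sq]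
    linarith
  have hle := real_inner_le_norm (u - w) (pr u - pr w)
  rcases eq_or_lt_of_le (norm_nonneg (pr u - pr w)) with h0 | h0
  · rw [← h0]; exact norm_nonneg _
  · nlinarith [key, hle]

end auxproj

set_option maxHeartbeats 4000000 in
theorem stmt_9 {n m : ℕ} (hm : 0 < m)
    (X : Set (EuclideanSpace ℝ (Fin n)))
    (hXne : X.Nonempty) (hXcl : IsClosed X) (hXcv : Convex ℝ X)
    (p q : Fin m → ℝ)
    (hp : ∀ i, 0 < p i) (hq : ∀ i, 0 < q i)
    (hps : ∑ i, p i = 1) (hqs : ∑ i, q i = 1)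
    (r : ℝ) (hr : r = ∑ i, (p i) ^ 2 / q i)
    (B : Fin m → EuclideanSpace ℝ (Fin n) → EuclideanSpace ℝ (Fin n))
    (L μ : ℝ) (hμ : 0 < μ) (hμL : μ ≤ L)
    (hLip : ∀ i x y, ‖B i x - B i y‖ ≤ L * ‖x - y‖)
    (A : Fin m → EuclideanSpace ℝ (Fin n) → EuclideanSpace ℝ (Fin n))
    (hA : ∀ i x, A i x = (p i / q i) • B i x)
    (Bbar : EuclideanSpace ℝ (Fin n) → EuclideanSpace ℝ (Fin n))
    (hBbar : ∀ x, Bbar x = ∑ i, p i • B i x)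
    (hmono : ∀ x y, μ * ‖x - y‖ ^ 2 ≤ ⟪Bbar x - Bbar y, x - y⟫)
    (proj : EuclideanSpace ℝ (Fin n) → EuclideanSpace ℝ (Fin n))
    (hproj_mem : ∀ z, proj z ∈ X)
    (hproj_near : ∀ z, ∀ w ∈ X, dist z (proj z) ≤ dist z w)
    (xstar : EuclideanSpace ℝ (Fin n))
    (hfix : ∀ γ : ℝ, 0 < γ → xstar = proj (xstar - γ • Bbar xstar))
    (MB : ℝ) (hMB : IsGreatest (Set.range fun i => ‖B i xstar‖) MB)
    (γ : ℕ → ℝ)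
    (hγ : ∀ t : ℕ, γ t = 2 / (μ * (t + 2 * (1 + 2 * r) * L ^ 2 / μ ^ 2)))
    {Ω : Type*} [MeasurableSpace Ω] (P : Measure Ω) [IsProbabilityMeasure P]
    (I : ℕ → Ω → Fin m) (hImeas : ∀ t, Measurable (I t))
    (hIindep : iIndepFun I P)
    (hIdist : ∀ t i, P {ω | I t ω = i} = ENNReal.ofReal (q i))
    (y0 : EuclideanSpace ℝ (Fin n)) (hy0X : y0 ∈ X)
    (y : ℕ → Ω → EuclideanSpace ℝ (Fin n))
    (hy0 : ∀ ω, y 0 ω = y0)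
    (hyrec : ∀ t ω, y (t + 1) ω = proj (y t ω - γ t • A (I t ω) (y t ω))) :
    ∀ t : ℕ, 1 ≤ t →
      ∫⁻ ω, ENNReal.ofReal (‖y t ω - xstar‖ ^ 2) ∂P
        ≤ ENNReal.ofReal
            (((2 * (1 + 2 * r) * L ^ 2 / μ ^ 2 - 1) * ‖y0 - xstar‖ ^ 2
              + 8 * r * MB ^ 2 / μ ^ 2) / t) := by
  classical
  have hL : 0 < L := lt_of_lt_of_le hμ hμL
  have hL2 : μ ^ 2 ≤ L ^ 2 := pow_le_pow_left₀ hμ.le hμL 2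
  have hμ2 : (0:ℝ) < μ ^ 2 := by positivity
  have hrpos : 0 < r := by
    rw [hr]
    exact Finset.sum_pos (fun i _ => div_pos (pow_pos (hp i) 2) (hq i))
      ⟨⟨0, hm⟩, Finset.mem_univ _⟩
  set c : ℝ := 2 * (1 + 2 * r) * L ^ 2 / μ ^ 2 with hc
  have hc2 : 2 < c := by
    rw [hc, lt_div_iff₀ hμ2]; nlinarith
  have hMBub : ∀ i, ‖B i xstar‖ ≤ MB := fun i => hMB.2 ⟨i, rfl⟩
  have hMB0 : 0 ≤ MB := by obtain ⟨i, hi⟩ := hMB.1; rw [← hi]; exact norm_nonneg _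
  set K : ℝ := 8 * r * MB ^ 2 / μ ^ 2 with hK
  have hK0 : 0 ≤ K := by positivity
  set N : ℝ := (c - 1) * ‖y0 - xstar‖ ^ 2 + K with hN
  have hy0n : (0:ℝ) ≤ ‖y0 - xstar‖ ^ 2 := by positivity
  have hN0 : 0 ≤ N := by nlinarith
  have hKN : K ≤ N := by nlinarith
  have hst : ∀ t : ℕ, 2 < (t:ℝ) + c := fun t => by
    have := Nat.cast_nonneg (α := ℝ) t; linarith
  have hγpos : ∀ t : ℕ, 0 < γ t := fun t => by
    rw [hγ t]
    exact div_pos two_pos (mul_pos hμ (by linarith [hst t]))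
  have hμγ : ∀ t : ℕ, μ * γ t = 2 / ((t:ℝ) + c) := by
    intro t
    have h0 : (t:ℝ) + c ≠ 0 := by have := hst t; linarith
    rw [hγ t]
    field_simp
  have hcnd : ∀ t : ℕ, 2 * r * L ^ 2 * γ t ≤ μ := by
    intro t
    have h1 : μ ^ 2 * c = 2 * (1 + 2 * r) * L ^ 2 := by
      rw [hc]; field_simp
    have ht0 : (0:ℝ) ≤ (t:ℝ) := Nat.cast_nonneg t
    have he : 2 * r * L ^ 2 * γ t = 4 * r * L ^ 2 / (μ * ((t:ℝ) + c)) := by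
      rw [hγ t]; ring
    rw [he, div_le_iff₀ (mul_pos hμ (by linarith [hst t]))]
    nlinarith [mul_nonneg hμ2.le ht0, sq_nonneg L]
  have hproj_ne : ∀ u w, ‖proj u - proj w‖ ≤ ‖u - w‖ :=
    proj_nonexpansive hXcv hproj_mem hproj_near
  -- sum of q i • A i x is Bbar x
  have hqA : ∀ x, ∑ i, q i • A i x = Bbar x := by
    intro x
    rw [hBbar]
    refine Finset.sum_congr rfl fun i _ => ?_
    rw [hA, smul_smul, mul_comm, div_mul_cancel₀ _ (hq i).ne']
  -- the one step bound
  have step : ∀ (t : ℕ) (x : EuclideanSpace ℝ (Fin n)),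
      ∑ i, q i * ‖proj (x - γ t • A i x) - xstar‖ ^ 2
        ≤ (1 - μ * γ t) * ‖x - xstar‖ ^ 2 + 2 * r * MB ^ 2 * γ t ^ 2 := by
    intro t x
    have hg0 : 0 < γ t := hγpos t
    set g := γ t with hgdef
    have hb : ∀ i, ‖proj (x - g • A i x) - xstar‖ ^ 2
        ≤ ‖x - xstar‖ ^ 2 - 2 * g * ⟪A i x - Bbar xstar, x - xstar⟫
          + g ^ 2 * ‖A i x - Bbar xstar‖ ^ 2 := by
      intro i
      have h1 : ‖proj (x - g • A i x) - xstar‖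
          ≤ ‖(x - g • A i x) - (xstar - g • Bbar xstar)‖ := by
        conv_lhs => rw [hfix g hg0]
        exact hproj_ne _ _
      have h2 : (x - g • A i x) - (xstar - g • Bbar xstar)
          = (x - xstar) - g • (A i x - Bbar xstar) := by
        rw [smul_sub]; abel
      have h3 : ‖(x - xstar) - g • (A i x - Bbar xstar)‖ ^ 2
          = ‖x - xstar‖ ^ 2 - 2 * g * ⟪A i x - Bbar xstar, x - xstar⟫
            + g ^ 2 * ‖A i x - Bbar xstar‖ ^ 2 := by
        rw [norm_sub_sq_real, real_inner_smul_right, norm_smul, Real.norm_eq_abs,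
          mul_pow, sq_abs, real_inner_comm]
        ring
      calc ‖proj (x - g • A i x) - xstar‖ ^ 2
          ≤ ‖(x - g • A i x) - (xstar - g • Bbar xstar)‖ ^ 2 :=
            pow_le_pow_left₀ (norm_nonneg _) h1 2
        _ = _ := by rw [h2, h3]
    have hinner : ∑ i, q i * ⟪A i x - Bbar xstar, x - xstar⟫
        = ⟪Bbar x - Bbar xstar, x - xstar⟫ := by
      have hsv : ∑ i, q i • (A i x - Bbar xstar) = Bbar x - Bbar xstar := by
        simp only [smul_sub]
        rw [Finset.sum_sub_distrib, hqA, ← Finset.sum_smul, hqs, one_smul]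
      conv_rhs => rw [← hsv, sum_inner]
      exact Finset.sum_congr rfl fun i _ => (real_inner_smul_left _ _ _).symm
    -- quadratic bound
    have hA_lip : ∀ i, q i * ‖A i x - A i xstar‖ ^ 2
        ≤ p i ^ 2 / q i * (L ^ 2 * ‖x - xstar‖ ^ 2) := by
      intro i
      have h1 : ‖A i x - A i xstar‖ = (p i / q i) * ‖B i x - B i xstar‖ := by
        rw [hA, hA, ← smul_sub, norm_smul, Real.norm_eq_abs,
          abs_of_pos (div_pos (hp i) (hq i))]
      rw [h1, mul_pow]
      have h2 : ‖B i x - B i xstar‖ ^ 2 ≤ (L * ‖x - xstar‖) ^ 2 :=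
        pow_le_pow_left₀ (norm_nonneg _) (hLip i x xstar) 2
      have hqi := hq i
      calc q i * ((p i / q i) ^ 2 * ‖B i x - B i xstar‖ ^ 2)
          ≤ q i * ((p i / q i) ^ 2 * (L * ‖x - xstar‖) ^ 2) := by
            exact mul_le_mul_of_nonneg_left
              (mul_le_mul_of_nonneg_left h2 (by positivity)) hqi.le
        _ = p i ^ 2 / q i * (L ^ 2 * ‖x - xstar‖ ^ 2) := by
            field_simp
    have hvar : ∑ i, q i * ‖A i xstar - Bbar xstar‖ ^ 2 ≤ r * MB ^ 2 := by
      have h1 : ∀ i : Fin m, q i * ‖A i xstar - Bbar xstar‖ ^ 2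
          = q i * ‖A i xstar‖ ^ 2 - 2 * ⟪q i • A i xstar, Bbar xstar⟫
            + q i * ‖Bbar xstar‖ ^ 2 := by
        intro i
        rw [norm_sub_sq_real, real_inner_smul_left]
        ring
      have h2 : ∑ i, ⟪q i • A i xstar, Bbar xstar⟫ = ‖Bbar xstar‖ ^ 2 := by
        rw [← sum_inner, hqA, real_inner_self_eq_norm_sq]
      have h3 : ∑ _i : Fin m, q _i * ‖Bbar xstar‖ ^ 2 = ‖Bbar xstar‖ ^ 2 := by
        rw [← Finset.sum_mul, hqs, one_mul]
      have hexp : ∑ i, q i * ‖A i xstar - Bbar xstar‖ ^ 2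
          = ∑ i, q i * ‖A i xstar‖ ^ 2 - ‖Bbar xstar‖ ^ 2 := by
        rw [Finset.sum_congr rfl fun i _ => h1 i, Finset.sum_add_distrib,
          Finset.sum_sub_distrib, ← Finset.mul_sum, h2, h3]
        ring
      have hterm : ∀ i : Fin m, q i * ‖A i xstar‖ ^ 2 ≤ p i ^ 2 / q i * MB ^ 2 := by
        intro i
        rw [hA, norm_smul, Real.norm_eq_abs, abs_of_pos (div_pos (hp i) (hq i)), mul_pow]
        have h4 : ‖B i xstar‖ ^ 2 ≤ MB ^ 2 :=
          pow_le_pow_left₀ (norm_nonneg _) (hMBub i) 2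
        calc q i * ((p i / q i) ^ 2 * ‖B i xstar‖ ^ 2)
            ≤ q i * ((p i / q i) ^ 2 * MB ^ 2) :=
              mul_le_mul_of_nonneg_left
                (mul_le_mul_of_nonneg_left h4 (by positivity)) (hq i).le
          _ = p i ^ 2 / q i * MB ^ 2 := by
              have := (hq i).ne'
              field_simp
      have h5 := Finset.sum_le_sum (fun i (_ : i ∈ Finset.univ) => hterm i)
      have h6 : ∑ i, p i ^ 2 / q i * MB ^ 2 = r * MB ^ 2 := by
        rw [← Finset.sum_mul, ← hr]
      rw [hexp]
      linarith [sq_nonneg ‖Bbar xstar‖, h5, h6.le, h6.ge]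
    have hsplit : ∀ i : Fin m, q i * ‖A i x - Bbar xstar‖ ^ 2
        ≤ 2 * (q i * ‖A i x - A i xstar‖ ^ 2)
          + 2 * (q i * ‖A i xstar - Bbar xstar‖ ^ 2) := by
      intro i
      have tri : ‖A i x - Bbar xstar‖ ≤ ‖A i x - A i xstar‖ + ‖A i xstar - Bbar xstar‖ :=
        norm_sub_le_norm_sub_add_norm_sub _ _ _
      have tri2 : ‖A i x - Bbar xstar‖ ^ 2
          ≤ (‖A i x - A i xstar‖ + ‖A i xstar - Bbar xstar‖) ^ 2 :=
        pow_le_pow_left₀ (norm_nonneg _) tri 2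
      nlinarith [mul_nonneg (hq i).le
        (sq_nonneg (‖A i x - A i xstar‖ - ‖A i xstar - Bbar xstar‖)),
        mul_le_mul_of_nonneg_left tri2 (hq i).le]
    have hquad : ∑ i, q i * ‖A i x - Bbar xstar‖ ^ 2
        ≤ 2 * r * L ^ 2 * ‖x - xstar‖ ^ 2 + 2 * r * MB ^ 2 := by
      have hb1 : ∑ i, q i * ‖A i x - A i xstar‖ ^ 2 ≤ r * (L ^ 2 * ‖x - xstar‖ ^ 2) := by
        calc ∑ i, q i * ‖A i x - A i xstar‖ ^ 2
            ≤ ∑ i, p i ^ 2 / q i * (L ^ 2 * ‖x - xstar‖ ^ 2) :=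
              Finset.sum_le_sum fun i _ => hA_lip i
          _ = r * (L ^ 2 * ‖x - xstar‖ ^ 2) := by rw [← Finset.sum_mul, ← hr]
      calc ∑ i, q i * ‖A i x - Bbar xstar‖ ^ 2
          ≤ ∑ i, (2 * (q i * ‖A i x - A i xstar‖ ^ 2)
              + 2 * (q i * ‖A i xstar - Bbar xstar‖ ^ 2)) :=
            Finset.sum_le_sum fun i _ => hsplit i
        _ = 2 * ∑ i, q i * ‖A i x - A i xstar‖ ^ 2
            + 2 * ∑ i, q i * ‖A i xstar - Bbar xstar‖ ^ 2 := by
            rw [Finset.sum_add_distrib, ← Finset.mul_sum, ← Finset.mul_sum]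
        _ ≤ 2 * (r * (L ^ 2 * ‖x - xstar‖ ^ 2)) + 2 * (r * MB ^ 2) := by
            have := hvar
            linarith [hb1]
        _ = 2 * r * L ^ 2 * ‖x - xstar‖ ^ 2 + 2 * r * MB ^ 2 := by ring
    have hsum_eq : ∑ i, q i * (‖x - xstar‖ ^ 2
          - 2 * g * ⟪A i x - Bbar xstar, x - xstar⟫
          + g ^ 2 * ‖A i x - Bbar xstar‖ ^ 2)
        = ‖x - xstar‖ ^ 2 - 2 * g * ⟪Bbar x - Bbar xstar, x - xstar⟫
          + g ^ 2 * ∑ i, q i * ‖A i x - Bbar xstar‖ ^ 2 := by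
      have h7 : ∀ i : Fin m, q i * (‖x - xstar‖ ^ 2
            - 2 * g * ⟪A i x - Bbar xstar, x - xstar⟫
            + g ^ 2 * ‖A i x - Bbar xstar‖ ^ 2)
          = q i * ‖x - xstar‖ ^ 2
            - (2 * g) * (q i * ⟪A i x - Bbar xstar, x - xstar⟫)
            + g ^ 2 * (q i * ‖A i x - Bbar xstar‖ ^ 2) := by
        intro i; ring
      rw [Finset.sum_congr rfl fun i _ => h7 i, Finset.sum_add_distrib,
        Finset.sum_sub_distrib, ← Finset.sum_mul, hqs, one_mul,
        ← Finset.mul_sum, ← Finset.mul_sum, hinner]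
    have hm1 := hmono x xstar
    calc ∑ i, q i * ‖proj (x - g • A i x) - xstar‖ ^ 2
        ≤ ∑ i, q i * (‖x - xstar‖ ^ 2
            - 2 * g * ⟪A i x - Bbar xstar, x - xstar⟫
            + g ^ 2 * ‖A i x - Bbar xstar‖ ^ 2) :=
          Finset.sum_le_sum fun i _ => mul_le_mul_of_nonneg_left (hb i) (hq i).le
      _ = ‖x - xstar‖ ^ 2 - 2 * g * ⟪Bbar x - Bbar xstar, x - xstar⟫
          + g ^ 2 * ∑ i, q i * ‖A i x - Bbar xstar‖ ^ 2 := hsum_eq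
      _ ≤ (1 - μ * g) * ‖x - xstar‖ ^ 2 + 2 * r * MB ^ 2 * g ^ 2 := by
          have hcn : 2 * r * L ^ 2 * g ≤ μ := hcnd t
          nlinarith [mul_nonneg hg0.le (sub_nonneg.2 hm1),
            mul_nonneg (sq_nonneg g) (sub_nonneg.2 hquad),
            mul_nonneg (mul_nonneg hg0.le hy0n) (sub_nonneg.2 hcn),
            mul_nonneg (mul_nonneg hg0.le (by positivity : (0:ℝ) ≤ ‖x - xstar‖ ^ 2))
              (sub_nonneg.2 hcn)]
    done
  -- deterministic recursion
  let Y : (ℕ → Fin m) → ℕ → EuclideanSpace ℝ (Fin n) := fun σ t =>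
    Nat.rec (motive := fun _ => EuclideanSpace ℝ (Fin n)) y0
      (fun s x => proj (x - γ s • A (σ s) x)) t
  have hY0 : ∀ σ, Y σ 0 = y0 := fun σ => rfl
  have hYs : ∀ σ t, Y σ (t + 1) = proj (Y σ t - γ t • A (σ t) (Y σ t)) := fun σ t => rfl
  have hYagree : ∀ (t : ℕ) (σ σ' : ℕ → Fin m), (∀ s, s < t → σ s = σ' s) → Y σ t = Y σ' t := by
    intro t
    induction t with
    | zero => intro σ σ' _; rfl
    | succ t ih =>
      intro σ σ' h
      rw [hYs, hYs, ih σ σ' (fun s hs => h s (Nat.lt_succ_of_lt hs)), h t (Nat.lt_succ_self t)]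
  have hyY : ∀ (t : ℕ) (ω : Ω), y t ω = Y (fun s => I s ω) t := by
    intro t
    induction t with
    | zero => intro ω; rw [hy0, hY0]
    | succ t ih => intro ω; rw [hyrec, ih, hYs]
  let ext : (t : ℕ) → (Fin t → Fin m) → (ℕ → Fin m) := fun t v s =>
    if h : s < t then v ⟨s, h⟩ else ⟨0, hm⟩
  let Z : (t : ℕ) → (Fin t → Fin m) → EuclideanSpace ℝ (Fin n) := fun t v => Y (ext t v) t
  have hZsnoc : ∀ (t : ℕ) (v : Fin t → Fin m) (i : Fin m),
      Z (t + 1) ((Fin.snoc v i : Fin (t+1) → Fin m))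
        = proj (Z t v - γ t • A i (Z t v)) := by
    intro t v i
    show Y (ext (t + 1) ((Fin.snoc v i : Fin (t+1) → Fin m))) (t + 1) = _
    rw [hYs]
    have h1 : ext (t + 1) ((Fin.snoc v i : Fin (t+1) → Fin m)) t = i := by
      show (if h : t < t + 1 then (Fin.snoc v i : Fin (t+1) → Fin m) ⟨t, h⟩
          else ⟨0, hm⟩) = i
      rw [dif_pos (Nat.lt_succ_self t)]
      exact Fin.snoc_last (n := t) (α := fun _ => Fin m) (x := i) (p := v)
    have h2 : Y (ext (t + 1) ((Fin.snoc v i : Fin (t+1) → Fin m))) t = Y (ext t v) t := by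
      apply hYagree
      intro s hs
      show (if h : s < t + 1 then (Fin.snoc v i : Fin (t+1) → Fin m) ⟨s, h⟩ else ⟨0, hm⟩)
          = (if h : s < t then v ⟨s, h⟩ else ⟨0, hm⟩)
      rw [dif_pos (Nat.lt_succ_of_lt hs), dif_pos hs]
      have he : (⟨s, Nat.lt_succ_of_lt hs⟩ : Fin (t + 1)) = Fin.castSucc ⟨s, hs⟩ := rfl
      rw [he, Fin.snoc_castSucc]
    rw [h1, h2]
  let e : ℕ → ℝ := fun t => ∑ v : Fin t → Fin m, (∏ s, q (v s)) * ‖Z t v - xstar‖ ^ 2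
  have he0 : e 0 = ‖y0 - xstar‖ ^ 2 := by
    show ∑ v : Fin 0 → Fin m, (∏ s, q (v s)) * ‖Z 0 v - xstar‖ ^ 2 = _
    have h1 : ∀ v : Fin 0 → Fin m, (∏ s, q (v s)) * ‖Z 0 v - xstar‖ ^ 2
        = ‖y0 - xstar‖ ^ 2 := by
      intro v
      rw [show Z 0 v = y0 from rfl]
      simp
    rw [Finset.sum_congr rfl fun v _ => h1 v]
    simp
  have hsnoc_prod : ∀ (t : ℕ) (v : Fin t → Fin m) (i : Fin m),
      (∏ s : Fin (t + 1), q ((Fin.snoc v i : Fin (t+1) → Fin m) s))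
        = (∏ s : Fin t, q (v s)) * q i := by
    intro t v i
    rw [Fin.prod_univ_castSucc]
    simp [Fin.snoc_castSucc, Fin.snoc_last]
  have wsum : ∀ t : ℕ, ∑ v : Fin t → Fin m, (∏ s, q (v s)) = 1 := by
    intro t
    induction t with
    | zero => simp
    | succ t ih =>
      have h1 : ∑ v : Fin (t + 1) → Fin m, (∏ s, q (v s))
          = ∑ x : Fin m × (Fin t → Fin m), (∏ s : Fin t, q (x.2 s)) * q x.1 := by
        rw [← Fintype.sum_equiv (Fin.snocEquiv (fun _ => Fin m))
          (fun x => (∏ s : Fin t, q (x.2 s)) * q x.1)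
          (fun v => ∏ s, q (v s)) (fun x => (hsnoc_prod t x.2 x.1).symm)]
      rw [h1, Fintype.sum_prod_type]
      have h2 : ∀ i : Fin m,
          ∑ v : Fin t → Fin m, (∏ s : Fin t, q (v s)) * q i = q i := by
        intro i
        rw [← Finset.sum_mul, ih, one_mul]
      calc ∑ i : Fin m, ∑ v : Fin t → Fin m, (∏ s : Fin t, q (v s)) * q i
          = ∑ i : Fin m, q i := Finset.sum_congr rfl fun i _ => h2 i
        _ = 1 := hqs
  have erec : ∀ t : ℕ, e (t + 1) ≤ (1 - μ * γ t) * e t + 2 * r * MB ^ 2 * γ t ^ 2 := by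
    intro t
    have h1 : e (t + 1) = ∑ x : Fin m × (Fin t → Fin m),
        ((∏ s : Fin t, q (x.2 s)) * q x.1)
          * ‖proj (Z t x.2 - γ t • A x.1 (Z t x.2)) - xstar‖ ^ 2 := by
      show ∑ v : Fin (t + 1) → Fin m, (∏ s, q (v s)) * ‖Z (t + 1) v - xstar‖ ^ 2 = _
      rw [← Fintype.sum_equiv (Fin.snocEquiv (fun _ => Fin m))
        (fun x => ((∏ s : Fin t, q (x.2 s)) * q x.1)
          * ‖proj (Z t x.2 - γ t • A x.1 (Z t x.2)) - xstar‖ ^ 2)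
        (fun v => (∏ s, q (v s)) * ‖Z (t + 1) v - xstar‖ ^ 2)
        (fun x => by
          show ((∏ s : Fin t, q (x.2 s)) * q x.1)
              * ‖proj (Z t x.2 - γ t • A x.1 (Z t x.2)) - xstar‖ ^ 2
            = (∏ s, q ((Fin.snoc x.2 x.1 : Fin (t+1) → Fin m) s))
              * ‖Z (t + 1) ((Fin.snoc x.2 x.1 : Fin (t+1) → Fin m)) - xstar‖ ^ 2
          rw [hsnoc_prod t x.2 x.1, hZsnoc t x.2 x.1])]
    rw [h1, Fintype.sum_prod_type, Finset.sum_comm]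
    have hb : ∀ v : Fin t → Fin m,
        ∑ i, ((∏ s : Fin t, q (v s)) * q i)
            * ‖proj (Z t v - γ t • A i (Z t v)) - xstar‖ ^ 2
          ≤ (∏ s : Fin t, q (v s))
            * ((1 - μ * γ t) * ‖Z t v - xstar‖ ^ 2 + 2 * r * MB ^ 2 * γ t ^ 2) := by
      intro v
      have hw : 0 ≤ ∏ s : Fin t, q (v s) := Finset.prod_nonneg fun s _ => (hq (v s)).le
      calc ∑ i, ((∏ s : Fin t, q (v s)) * q i)
              * ‖proj (Z t v - γ t • A i (Z t v)) - xstar‖ ^ 2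
          = (∏ s : Fin t, q (v s))
              * ∑ i, q i * ‖proj (Z t v - γ t • A i (Z t v)) - xstar‖ ^ 2 := by
            rw [Finset.mul_sum]
            exact Finset.sum_congr rfl fun i _ => by ring
        _ ≤ _ := mul_le_mul_of_nonneg_left (step t (Z t v)) hw
    calc ∑ v : Fin t → Fin m, ∑ i, ((∏ s : Fin t, q (v s)) * q i)
            * ‖proj (Z t v - γ t • A i (Z t v)) - xstar‖ ^ 2
        ≤ ∑ v : Fin t → Fin m, (∏ s : Fin t, q (v s))
            * ((1 - μ * γ t) * ‖Z t v - xstar‖ ^ 2 + 2 * r * MB ^ 2 * γ t ^ 2) :=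
          Finset.sum_le_sum fun v _ => hb v
      _ = (1 - μ * γ t) * e t + 2 * r * MB ^ 2 * γ t ^ 2 := by
          simp only [mul_add]
          rw [Finset.sum_add_distrib]
          congr 1
          · show _ = (1 - μ * γ t)
              * ∑ v : Fin t → Fin m, (∏ s, q (v s)) * ‖Z t v - xstar‖ ^ 2
            rw [Finset.mul_sum]
            exact Finset.sum_congr rfl fun v _ => by ring
          · rw [← Finset.sum_mul, wsum t, one_mul]
  -- expectation identity
  have hkey : ∀ t : ℕ,
      ∫⁻ ω, ENNReal.ofReal (‖y t ω - xstar‖ ^ 2) ∂P = ENNReal.ofReal (e t) := by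
    intro t
    set S : (Fin t → Fin m) → Set Ω := fun v => ⋂ s : Fin t, I s ⁻¹' {v s} with hS
    have hSmeas : ∀ v, MeasurableSet (S v) :=
      fun v => MeasurableSet.iInter fun s => hImeas s (measurableSet_singleton _)
    have hpoint : ∀ ω, ENNReal.ofReal (‖y t ω - xstar‖ ^ 2)
        = ∑ v : Fin t → Fin m,
            Set.indicator (S v) (fun _ => ENNReal.ofReal (‖Z t v - xstar‖ ^ 2)) ω := by
      intro ω
      have hmem : ω ∈ S (fun s => I s ω) := Set.mem_iInter.2 fun s => rfl
      rw [Finset.sum_eq_single (fun s : Fin t => I s ω)]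
      · rw [Set.indicator_of_mem hmem]
        have hyZ : y t ω = Z t (fun s => I s ω) := by
          rw [hyY]
          exact hYagree t _ _ (fun s hs => by
            show I s ω = (if h : s < t then I (↑(⟨s, h⟩ : Fin t)) ω else (⟨0, hm⟩ : Fin m))
            rw [dif_pos hs])
        rw [hyZ]
      · intro v _ hv
        apply Set.indicator_of_notMem
        intro hmem'
        apply hv
        funext s
        have := Set.mem_iInter.1 hmem' s
        exact (Set.mem_singleton_iff.1 this).symm
      · intro h
        exact absurd (Finset.mem_univ _) h
    rw [lintegral_congr hpoint,
      lintegral_finset_sum _ (fun v _ => measurable_const.indicator (hSmeas v))]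
    have hPS : ∀ v : Fin t → Fin m, P (S v) = ENNReal.ofReal (∏ s, q (v s)) := by
      intro v
      have hSeq : S v = ⋂ i ∈ Finset.range t,
          I i ⁻¹' (if h : i < t then ({v ⟨i, h⟩} : Set (Fin m)) else Set.univ) := by
        rw [hS]
        ext ω
        simp only [Set.mem_iInter, Set.mem_preimage, Finset.mem_range]
        constructor
        · intro h i hi
          rw [dif_pos hi]
          exact h ⟨i, hi⟩
        · intro h s
          have := h s s.isLt
          rwa [dif_pos s.isLt, Fin.eta] at this
      have hind := hIindep.measure_inter_preimage_eq_mul (Finset.range t)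
        (sets := fun i => if h : i < t then ({v ⟨i, h⟩} : Set (Fin m)) else Set.univ)
        (fun i _ => by
          show MeasurableSet (if h : i < t then ({v ⟨i, h⟩} : Set (Fin m)) else Set.univ)
          by_cases h : i < t
          · rw [dif_pos h]; exact measurableSet_singleton _
          · rw [dif_neg h]; exact MeasurableSet.univ)
      rw [hSeq, hind]
      have hprod : (∏ i ∈ Finset.range t, P (I i ⁻¹'
            (if h : i < t then ({v ⟨i, h⟩} : Set (Fin m)) else Set.univ)))
          = ∏ s : Fin t, ENNReal.ofReal (q (v s)) := by
        rw [← Fin.prod_univ_eq_prod_range (fun i => P (I i ⁻¹'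
          (if h : i < t then ({v ⟨i, h⟩} : Set (Fin m)) else Set.univ))) t]
        refine Finset.prod_congr rfl fun s _ => ?_
        rw [dif_pos s.isLt, Fin.eta]
        rw [show I (↑s) ⁻¹' {v s} = {ω | I (↑s) ω = v s} from rfl]
        exact hIdist (↑s) (v s)
      rw [hprod, ← ENNReal.ofReal_prod_of_nonneg (fun s _ => (hq (v s)).le)]
    rw [Finset.sum_congr rfl fun v (_ : v ∈ Finset.univ) => by
      rw [lintegral_indicator_const (hSmeas v), hPS v,
        ← ENNReal.ofReal_mul (by positivity : (0:ℝ) ≤ ‖Z t v - xstar‖ ^ 2),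
        show ‖Z t v - xstar‖ ^ 2 * (∏ s, q (v s))
          = (∏ s, q (v s)) * ‖Z t v - xstar‖ ^ 2 from mul_comm _ _]]
    rw [← ENNReal.ofReal_sum_of_nonneg (fun v _ =>
      mul_nonneg (Finset.prod_nonneg fun s _ => (hq (v s)).le) (by positivity))]
  -- induction on t
  have ebound : ∀ t : ℕ, e t ≤ N / ((t : ℝ) + c - 1) := by
    intro t
    induction t with
    | zero =>
      rw [he0, Nat.cast_zero, zero_add, le_div_iff₀ (by linarith : (0:ℝ) < c - 1)]
      nlinarith
    | succ t ih =>
      have hs2 : 2 < (t : ℝ) + c := hst t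
      set s : ℝ := (t : ℝ) + c with hsdef
      have hs0 : 0 < s := by linarith
      have hs10 : 0 < s - 1 := by linarith
      have h2 : 2 * r * MB ^ 2 * γ t ^ 2 = K / s ^ 2 := by
        have hμ0 : μ ≠ 0 := hμ.ne'
        have h0 : (t:ℝ) + c ≠ 0 := by linarith
        rw [hγ t, hK, hsdef]
        field_simp
        ring
      have h1 : e (t + 1) ≤ (1 - 2 / s) * e t + K / s ^ 2 := by
        have h3 := erec t
        rw [hμγ t, h2] at h3
        exact h3
      have hfrac : (1 - 2 / s) * (N / (s - 1)) + K / s ^ 2 ≤ N / s := by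
        have e1 : (1 - 2 / s) * (N / (s - 1)) + K / s ^ 2
            = N / s - (N / (s * (s - 1)) - K / s ^ 2) := by
          field_simp
          ring
        have e2 : K / s ^ 2 ≤ N / (s * (s - 1)) := by
          apply div_le_div₀ hN0 hKN (by positivity)
          nlinarith
        rw [e1]
        linarith
      have hmul : (1 - 2 / s) * e t ≤ (1 - 2 / s) * (N / (s - 1)) := by
        apply mul_le_mul_of_nonneg_left ih
        rw [sub_nonneg, div_le_one hs0]
        linarith
      have hcast : ((t + 1 : ℕ) : ℝ) + c - 1 = s := by
        push_cast
        rw [hsdef]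
        ring
      rw [hcast]
      linarith
  -- conclude
  intro t ht
  rw [hkey t]
  apply ENNReal.ofReal_le_ofReal
  have ht1 : (1 : ℝ) ≤ (t : ℝ) := by exact_mod_cast ht
  have h1 : N / ((t : ℝ) + c - 1) ≤ N / t :=
    div_le_div₀ hN0 le_rfl (by linarith) (by linarith)
  calc e t ≤ N / ((t : ℝ) + c - 1) := ebound t
    _ ≤ N / t := h1
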